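/- Let β > 0, m > 0, a > 0 and set Δ = √(a/m). Then the kernel S_β(τ,τ′) = (e^{−|τ−τ′|Δ} + e^{−(β−|τ−τ′|)Δ}) / (2√(ma)(1 − e^{−βΔ})) is positive semidefinite on [0,β]: for every n ∈ ℕ, every τ₁,…,τ_n ∈ [0,β] and every c₁,…,c_n ∈ ℝ, one has Σ_{i=1}^n Σ_{j=1}^n c_i c_j S_β(τ_i, τ_j) ≥ 0. -/

import Mathlib

open Real MeasureTheory

private noncomputable def ind (y : ℝ) : ℝ → ℝ := Set.indicator {u : ℝ | u ≤ y} fun _ => (1:ℝ)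

private lemma ind_ii (y A B : ℝ) : IntervalIntegrable (ind y) volume A B := by
  rw [ind, intervalIntegrable_iff]
  exact ((integrableOn_const_iff (C := (1:ℝ))).mpr (Or.inr measure_Ioc_lt_top)).indicator measurableSet_Iic

private lemma ind_int (y X : ℝ) (h0 : 0 ≤ y) (hX : y ≤ X) :
    ∫ u in (0:ℝ)..X, ind y u = y := by
  rw [ind, intervalIntegral.integral_indicator ⟨h0, hX⟩]; simp

private lemma ind_mul (y z u : ℝ) : ind y u * ind z u = ind (min y z) u := by
  simp only [ind, Set.indicator_apply, Set.mem_setOf_eq, le_min_iff]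
  split_ifs <;> simp_all

private lemma ind_one {y u : ℝ} (h : u ≤ y) : ind y u = 1 := by
  rw [ind]; exact Set.indicator_of_mem (show u ∈ {u : ℝ | u ≤ y} from h) _

private lemma ii_sum {n : ℕ} (f : Fin n → ℝ → ℝ) (A B : ℝ)
    (h : ∀ i, IntervalIntegrable (f i) volume A B) :
    IntervalIntegrable (fun u => ∑ i, f i u) volume A B := by
  have heq : (fun u => ∑ i, f i u) = ∑ i, f i := by funext u; simp
  rw [heq]; exact IntervalIntegrable.sum _ fun i _ => h i

set_option maxHeartbeats 1000000 in
private lemma quad_key (q : ℝ) (hq0 : 0 < q) (hq1 : q < 1) (n : ℕ) (x b : Fin n → ℝ)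
    (hx1 : ∀ i, 1 ≤ x i) (hx2 : ∀ i, x i ≤ 1 / q ^ 2) :
    0 ≤ ∑ i : Fin n, ∑ j : Fin n,
      b i * b j * (min (x i) (x j) + q * max (x i) (x j)) := by
  set X : ℝ := 1 / q ^ 2 with hXdef
  have hX1 : 1 ≤ X := by
    rw [hXdef, le_div_iff₀ (by positivity)]; nlinarith
  have hx0 : ∀ i, 0 ≤ x i := fun i => le_trans zero_le_one (hx1 i)
  set σ : ℝ := ∑ i, b i with hσ
  set F : ℝ → ℝ := fun u => ∑ i, b i * ind (x i) u with hF
  set G : ℝ → ℝ := fun u => ∑ i, ∑ j, b i * b j * ind (min (x i) (x j)) u with hG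
  -- F^2 = G
  have hF2 : ∀ u, F u ^ 2 = G u := by
    intro u
    rw [hF, hG, pow_two, Finset.sum_mul_sum]
    refine Finset.sum_congr rfl fun i _ => Finset.sum_congr rfl fun j _ => ?_
    rw [show b i * ind (x i) u * (b j * ind (x j) u)
        = b i * b j * (ind (x i) u * ind (x j) u) by ring, ind_mul]
  -- integrability
  have hFi : ∀ A B : ℝ, IntervalIntegrable F volume A B := by
    intro A B; rw [hF]
    exact ii_sum _ A B fun i => (ind_ii (x i) A B).const_mul (b i)
  have hGi : ∀ A B : ℝ, IntervalIntegrable G volume A B := by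
    intro A B; rw [hG]
    exact ii_sum _ A B fun i =>
      ii_sum _ A B fun j => (ind_ii (min (x i) (x j)) A B).const_mul (b i * b j)
  set g : ℝ → ℝ := fun u => (1 - q) * F u ^ 2 + 2 * q * σ * F u with hg
  have hgeq : g = fun u => (1 - q) * G u + 2 * q * σ * F u := by
    funext u; rw [hg]; simp only [hF2]
  have hgi : ∀ A B : ℝ, IntervalIntegrable g volume A B := by
    intro A B
    rw [hgeq]
    exact ((hGi A B).const_mul _).add ((hFi A B).const_mul _)
  -- integrals
  have hIF : ∫ u in (0:ℝ)..X, F u = ∑ i, b i * x i := by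
    rw [hF, intervalIntegral.integral_finset_sum
      (fun i _ => (ind_ii (x i) 0 X).const_mul (b i))]
    refine Finset.sum_congr rfl fun i _ => ?_
    rw [intervalIntegral.integral_const_mul, ind_int _ _ (hx0 i) (hx2 i)]
  have hIG : ∫ u in (0:ℝ)..X, G u = ∑ i, ∑ j, b i * b j * min (x i) (x j) := by
    rw [hG, intervalIntegral.integral_finset_sum (fun i _ =>
      ii_sum _ 0 X fun j => (ind_ii (min (x i) (x j)) 0 X).const_mul (b i * b j))]
    refine Finset.sum_congr rfl fun i _ => ?_
    rw [intervalIntegral.integral_finset_sum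
      (fun j _ => (ind_ii (min (x i) (x j)) 0 X).const_mul (b i * b j))]
    refine Finset.sum_congr rfl fun j _ => ?_
    rw [intervalIntegral.integral_const_mul,
      ind_int _ _ (le_min (hx0 i) (hx0 j)) (le_trans (min_le_left _ _) (hx2 i))]
  have hIg : ∫ u in (0:ℝ)..X, g u
      = (1 - q) * (∑ i, ∑ j, b i * b j * min (x i) (x j)) + 2 * q * σ * (∑ i, b i * x i) := by
    rw [hgeq, intervalIntegral.integral_add ((hGi 0 X).const_mul _) ((hFi 0 X).const_mul _),
      intervalIntegral.integral_const_mul, intervalIntegral.integral_const_mul, hIG, hIF]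
  -- algebra: the quadratic form equals the integral
  have halg : ∑ i : Fin n, ∑ j : Fin n, b i * b j * (min (x i) (x j) + q * max (x i) (x j))
      = (1 - q) * (∑ i, ∑ j, b i * b j * min (x i) (x j)) + 2 * q * σ * (∑ i, b i * x i) := by
    have step : ∀ i j : Fin n, b i * b j * (min (x i) (x j) + q * max (x i) (x j))
        = (1 - q) * (b i * b j * min (x i) (x j))
          + (q * (b i * x i * b j) + q * (b j * x j * b i)) := fun i j => by
      linear_combination (q * b i * b j) * (min_add_max (x i) (x j))
    rw [Finset.sum_congr rfl fun i _ => Finset.sum_congr rfl fun j _ => step i j]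
    simp only [Finset.sum_add_distrib]
    have e1 : ∑ i : Fin n, ∑ j : Fin n, q * (b i * x i * b j)
        = q * ((∑ i, b i * x i) * σ) := by
      rw [hσ, Finset.sum_mul_sum]
      simp only [Finset.mul_sum]
    have e2 : ∑ i : Fin n, ∑ j : Fin n, q * (b j * x j * b i)
        = q * ((∑ i, b i * x i) * σ) := by
      rw [Finset.sum_comm, hσ, Finset.sum_mul_sum]
      simp only [Finset.mul_sum]
    have e0 : ∑ i : Fin n, ∑ j : Fin n, (1 - q) * (b i * b j * min (x i) (x j))
        = (1 - q) * ∑ i : Fin n, ∑ j : Fin n, b i * b j * min (x i) (x j) := by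
      simp only [Finset.mul_sum]
    rw [e0, e1, e2]; ring
  rw [halg, ← hIg,
    ← intervalIntegral.integral_add_adjacent_intervals (hgi 0 1) (hgi 1 X)]
  have h1q : 0 < 1 - q := by linarith
  have L1 : ∫ u in (0:ℝ)..1, g u = (1 + q) * σ ^ 2 := by
    have hcg : Set.EqOn g (fun _ => (1 + q) * σ ^ 2) (Set.uIcc (0:ℝ) 1) := by
      intro u hu
      rw [Set.uIcc_of_le zero_le_one] at hu
      have hFu : F u = σ := by
        simp only [hF, hσ]
        exact Finset.sum_congr rfl fun i _ => by
          rw [ind_one (le_trans hu.2 (hx1 i)), mul_one]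
      simp only [hg]
      rw [hFu]; ring
    rw [intervalIntegral.integral_congr hcg, intervalIntegral.integral_const]
    simp
  have L2 : -(X - 1) * (q ^ 2 * σ ^ 2 / (1 - q)) ≤ ∫ u in (1:ℝ)..X, g u := by
    have hmono := intervalIntegral.integral_mono_on (μ := volume)
      (f := fun _ => -(q ^ 2 * σ ^ 2 / (1 - q))) (g := g) hX1
      intervalIntegrable_const (hgi 1 X) ?_
    · rw [intervalIntegral.integral_const, smul_eq_mul] at hmono
      calc -(X - 1) * (q ^ 2 * σ ^ 2 / (1 - q))
          = (X - 1) * -(q ^ 2 * σ ^ 2 / (1 - q)) := by ring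
        _ ≤ _ := hmono
    · intro u _
      simp only [hg]
      have hd : q ^ 2 * σ ^ 2 / (1 - q) * (1 - q) = q ^ 2 * σ ^ 2 :=
        div_mul_cancel₀ _ (ne_of_gt h1q)
      nlinarith [sq_nonneg ((1 - q) * F u + q * σ), h1q, hd]
  have hzero : (1 + q) * σ ^ 2 + (-(X - 1) * (q ^ 2 * σ ^ 2 / (1 - q))) = 0 := by
    rw [hXdef]
    field_simp
    ring
  rw [L1]
  linarith [L2, hzero]

private lemma entry_eq (Δ B s t : ℝ) (hΔ : 0 ≤ Δ) :
    Real.exp (-|s - t| * Δ) + Real.exp (-(B - |s - t|) * Δ)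
      = (min (Real.exp (2*Δ*s)) (Real.exp (2*Δ*t))
          + Real.exp (-B*Δ) * max (Real.exp (2*Δ*s)) (Real.exp (2*Δ*t)))
        / (Real.exp (Δ*s) * Real.exp (Δ*t)) := by
  wlog h : s ≤ t generalizing s t
  · rw [abs_sub_comm, min_comm, max_comm, mul_comm (Real.exp (Δ*s))]
    exact this t s (le_of_not_ge h)
  have habs : |s - t| = t - s := by rw [abs_sub_comm]; exact abs_of_nonneg (by linarith)
  have hmin : min (Real.exp (2*Δ*s)) (Real.exp (2*Δ*t)) = Real.exp (2*Δ*s) :=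
    min_eq_left (Real.exp_le_exp.mpr (by nlinarith))
  have hmax : max (Real.exp (2*Δ*s)) (Real.exp (2*Δ*t)) = Real.exp (2*Δ*t) :=
    max_eq_right (Real.exp_le_exp.mpr (by nlinarith))
  rw [habs, hmin, hmax, eq_div_iff (by positivity)]
  simp only [← Real.exp_add, add_mul]
  congr 1 <;> ring_nf

/-- The harmonic propagator
`S_β(τ, τ′) = (e^{-|τ-τ′|Δ} + e^{-(β-|τ-τ′|)Δ}) / (2√(ma)(1 - e^{-βΔ}))`,
`Δ = √(a/m)`, is a positive semidefinite kernel on `[0, β]`. -/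
theorem propagator_posSemidef
    (β m a : ℝ) (hβ : 0 < β) (hm : 0 < m) (ha : 0 < a) :
    let Δ : ℝ := Real.sqrt (a / m)
    let S : ℝ → ℝ → ℝ := fun τ τ' =>
      (Real.exp (-|τ - τ'| * Δ) + Real.exp (-(β - |τ - τ'|) * Δ)) /
        (2 * Real.sqrt (m * a) * (1 - Real.exp (-β * Δ)))
    ∀ (n : ℕ) (τ : Fin n → ℝ), (∀ i, τ i ∈ Set.Icc 0 β) →
      ∀ c : Fin n → ℝ, 0 ≤ ∑ i : Fin n, ∑ j : Fin n, c i * c j * S (τ i) (τ j) := by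
  intro Δ S n τ hτ c
  have hΔ : 0 < Δ := Real.sqrt_pos.mpr (div_pos ha hm)
  have hq0 : 0 < Real.exp (-β * Δ) := Real.exp_pos _
  have hq1 : Real.exp (-β * Δ) < 1 := by
    rw [Real.exp_lt_one_iff]; nlinarith
  have hD : 0 < 2 * Real.sqrt (m * a) * (1 - Real.exp (-β * Δ)) := by
    have := Real.sqrt_pos.mpr (mul_pos hm ha)
    nlinarith
  have hS : ∀ s t : ℝ, S s t
      = (Real.exp (-|s - t| * Δ) + Real.exp (-(β - |s - t|) * Δ)) /
        (2 * Real.sqrt (m * a) * (1 - Real.exp (-β * Δ))) := fun s t => rfl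
  -- rewrite each entry
  have hentry : ∀ i j, c i * c j * S (τ i) (τ j)
      = ((c i / Real.exp (Δ * τ i)) * (c j / Real.exp (Δ * τ j)) *
          (min (Real.exp (2 * Δ * τ i)) (Real.exp (2 * Δ * τ j))
            + Real.exp (-β * Δ) * max (Real.exp (2 * Δ * τ i)) (Real.exp (2 * Δ * τ j)))) /
        (2 * Real.sqrt (m * a) * (1 - Real.exp (-β * Δ))) := by
    intro i j
    rw [hS, entry_eq Δ β (τ i) (τ j) hΔ.le]
    have e1 := Real.exp_ne_zero (Δ * τ i)
    have e2 := Real.exp_ne_zero (Δ * τ j)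
    field_simp
  calc (0:ℝ)
      ≤ (∑ i : Fin n, ∑ j : Fin n,
          (c i / Real.exp (Δ * τ i)) * (c j / Real.exp (Δ * τ j)) *
          (min (Real.exp (2 * Δ * τ i)) (Real.exp (2 * Δ * τ j))
            + Real.exp (-β * Δ) * max (Real.exp (2 * Δ * τ i)) (Real.exp (2 * Δ * τ j)))) /
        (2 * Real.sqrt (m * a) * (1 - Real.exp (-β * Δ))) := by
        apply div_nonneg _ hD.le
        apply quad_key (Real.exp (-β * Δ)) hq0 hq1 n
          (fun i => Real.exp (2 * Δ * τ i)) (fun i => c i / Real.exp (Δ * τ i))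
        · intro i
          rw [Real.one_le_exp_iff]
          have := (hτ i).1
          positivity
        · intro i
          rw [show (1:ℝ) / Real.exp (-β * Δ) ^ 2 = Real.exp (2 * Δ * β) by
            rw [← Real.exp_nat_mul]
            push_cast
            rw [one_div, ← Real.exp_neg]
            ring_nf]
          exact Real.exp_le_exp.mpr (by nlinarith [(hτ i).2])
    _ = ∑ i : Fin n, ∑ j : Fin n, c i * c j * S (τ i) (τ j) := by
        simp only [hentry, Finset.sum_div]
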